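/- arXiv:math/9809084 — 3 statements merged into one kernel-verified Lean document; each statement's English description precedes it below -/
import Mathlib

section
/- Let k be a commutative ring, n a positive integer, M = k^n free with basis m₁,…,m_n, and x^{ij}_{uv} ∈ k a family of scalars determining the k-linear map R: M⊗M → M⊗M, R(m_u⊗m_v) = Σ_{i,j} x^{ij}_{uv} m_i⊗m_j. Then R satisfies R¹²R²³ = R¹³R¹² on M⊗M⊗M if and only if the k-bilinear multiplication on M⊗M determined on basis elements by (m_k⊗m_l)·(m_r⊗m_j) := Σ_a x^{ak}_{jl} m_r⊗m_a is associative. In this case M is a left module over the (possibly non-unital) algebra M⊗M via (m_k⊗m_l)•m_j := Σ_a x^{ak}_{jl} m_a. -/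
open TensorProduct

variable {k M : Type*} [CommRing k] [AddCommGroup M] [Module k M]

/-- `R¹² = R ⊗ I` on `M ⊗ M ⊗ M`. -/
noncomputable def leg12 (R : M ⊗[k] M →ₗ[k] M ⊗[k] M) :
    M ⊗[k] (M ⊗[k] M) →ₗ[k] M ⊗[k] (M ⊗[k] M) :=
  (TensorProduct.assoc k M M M).toLinearMap ∘ₗ
    (TensorProduct.map R LinearMap.id) ∘ₗ (TensorProduct.assoc k M M M).symm.toLinearMap

/-- `R²³ = I ⊗ R` on `M ⊗ M ⊗ M`. -/
noncomputable def leg23 (R : M ⊗[k] M →ₗ[k] M ⊗[k] M) :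
    M ⊗[k] (M ⊗[k] M) →ₗ[k] M ⊗[k] (M ⊗[k] M) :=
  TensorProduct.map LinearMap.id R

/-- `R¹³ = (I ⊗ τ) ∘ (R ⊗ I) ∘ (I ⊗ τ)` on `M ⊗ M ⊗ M`. -/
noncomputable def leg13 (R : M ⊗[k] M →ₗ[k] M ⊗[k] M) :
    M ⊗[k] (M ⊗[k] M) →ₗ[k] M ⊗[k] (M ⊗[k] M) :=
  (TensorProduct.map LinearMap.id (TensorProduct.comm k M M).toLinearMap) ∘ₗ
    leg12 R ∘ₗ (TensorProduct.map LinearMap.id (TensorProduct.comm k M M).toLinearMap)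

set_option synthInstance.maxHeartbeats 1000000
set_option maxHeartbeats 2000000

section Aux

variable {k : Type*} [CommRing k] {n : ℕ}

local notation "e" => Pi.basisFun k (Fin n)

/-- extensionality on the basis tensors of `M ⊗ M`. -/
private lemma ext2' {V : Type*} [AddCommGroup V] [Module k V]
    {f g : (Fin n → k) ⊗[k] (Fin n → k) →ₗ[k] V}
    (h : ∀ a b : Fin n, f ((e a : Fin n → k) ⊗ₜ[k] (e b : Fin n → k))
      = g ((e a : Fin n → k) ⊗ₜ[k] (e b : Fin n → k))) : f = g := by
  apply Module.Basis.ext ((Pi.basisFun k (Fin n)).tensorProduct (Pi.basisFun k (Fin n)))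
  rintro ⟨a, b⟩
  simpa [Module.Basis.tensorProduct_apply] using h a b

private lemma key_iff (F G : Fin n → Fin n → Fin n → Fin n → k) :
    ((∑ i, ∑ j, ∑ p, ∑ q, F i j p q •
        ((e p : Fin n → k) ⊗ₜ[k] ((e q : Fin n → k) ⊗ₜ[k] (e j : Fin n → k)))) =
      ∑ i, ∑ j, ∑ p, ∑ q, G i j p q •
        ((e p : Fin n → k) ⊗ₜ[k] ((e j : Fin n → k) ⊗ₜ[k] (e q : Fin n → k)))) ↔
    ∀ p b c : Fin n, (∑ i, F i c p b) = ∑ i, G i b p c := by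
  set B3 := (Pi.basisFun k (Fin n)).tensorProduct
    ((Pi.basisFun k (Fin n)).tensorProduct (Pi.basisFun k (Fin n))) with hB3
  constructor
  · intro h p b c
    have h2 := congrArg (fun z => (B3.repr z) (p, (b, c))) h
    simpa [hB3, map_sum, Finset.sum_apply', Module.Basis.tensorProduct_repr_tmul_apply,
      Pi.basisFun_repr, Pi.basisFun_apply, Pi.single_apply, Finset.sum_ite_eq,
      Finset.sum_ite_eq', mul_ite, ite_mul] using h2
  · intro h
    apply B3.repr.injective
    ext ⟨p, b, c⟩
    simpa [hB3, map_sum, Finset.sum_apply', Module.Basis.tensorProduct_repr_tmul_apply,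
      Pi.basisFun_repr, Pi.basisFun_apply, Pi.single_apply, Finset.sum_ite_eq,
      Finset.sum_ite_eq', mul_ite, ite_mul] using h p b c

private lemma key2_iff (t : Fin n) (F G : Fin n → Fin n → k) :
    ((∑ a, ∑ b, F a b • ((e t : Fin n → k) ⊗ₜ[k] (e b : Fin n → k))) =
      ∑ a, ∑ b, G a b • ((e t : Fin n → k) ⊗ₜ[k] (e b : Fin n → k))) ↔
    ∀ b : Fin n, (∑ a, F a b) = ∑ a, G a b := by
  set B2 := (Pi.basisFun k (Fin n)).tensorProduct (Pi.basisFun k (Fin n)) with hB2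
  constructor
  · intro h b
    have h2 := congrArg (fun z => (B2.repr z) (t, b)) h
    simpa [hB2, map_sum, Finset.sum_apply', Module.Basis.tensorProduct_repr_tmul_apply,
      Pi.basisFun_repr, Pi.basisFun_apply, Pi.single_apply, Finset.sum_ite_eq,
      Finset.sum_ite_eq', mul_ite, ite_mul] using h2
  · intro h
    apply B2.repr.injective
    ext ⟨t', b⟩
    by_cases ht : t' = t
    · subst ht
      simpa [hB2, map_sum, Finset.sum_apply', Module.Basis.tensorProduct_repr_tmul_apply,
        Pi.basisFun_repr, Pi.basisFun_apply, Pi.single_apply, Finset.sum_ite_eq,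
        Finset.sum_ite_eq', mul_ite, ite_mul] using h b
    · simp [hB2, map_sum, Finset.sum_apply', Module.Basis.tensorProduct_repr_tmul_apply,
        Pi.basisFun_repr, Pi.basisFun_apply, Pi.single_apply, Ne.symm ht, ht]

private lemma key1 (F G : Fin n → Fin n → k)
    (h : ∀ b : Fin n, (∑ a, F a b) = ∑ a, G a b) :
    (∑ a, ∑ b, F a b • (e b : Fin n → k)) = ∑ a, ∑ b, G a b • (e b : Fin n → k) := by
  funext c
  have h2 := h c
  simpa [Finset.sum_apply, Pi.basisFun_apply, Pi.single_apply, mul_ite,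
    Finset.sum_ite_eq, Finset.sum_ite_eq'] using h2


section LegLemmas

variable (x : Fin n → Fin n → Fin n → Fin n → k)
  (R : (Fin n → k) ⊗[k] (Fin n → k) →ₗ[k] (Fin n → k) ⊗[k] (Fin n → k))
  (hR : ∀ u v : Fin n,
      R ((Pi.basisFun k (Fin n)) u ⊗ₜ[k] (Pi.basisFun k (Fin n)) v) =
        ∑ i, ∑ j, x i j u v • ((Pi.basisFun k (Fin n)) i ⊗ₜ[k] (Pi.basisFun k (Fin n)) j))

include hR

private lemma leg12_basis (u v w : Fin n) :
    leg12 R ((e u : Fin n → k) ⊗ₜ[k] ((e v : Fin n → k) ⊗ₜ[k] (e w : Fin n → k))) =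
    ∑ i, ∑ j, x i j u v •
      ((e i : Fin n → k) ⊗ₜ[k] ((e j : Fin n → k) ⊗ₜ[k] (e w : Fin n → k))) := by
  simp only [leg12, LinearMap.coe_comp, LinearEquiv.coe_coe, Function.comp_apply,
    TensorProduct.assoc_symm_tmul, TensorProduct.map_tmul, LinearMap.id_coe, id_eq, hR,
    TensorProduct.sum_tmul, TensorProduct.smul_tmul', map_sum, map_smul,
    TensorProduct.assoc_tmul]

private lemma leg23_basis (u v w : Fin n) :
    leg23 R ((e u : Fin n → k) ⊗ₜ[k] ((e v : Fin n → k) ⊗ₜ[k] (e w : Fin n → k))) =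
    ∑ i, ∑ j, x i j v w •
      ((e u : Fin n → k) ⊗ₜ[k] ((e i : Fin n → k) ⊗ₜ[k] (e j : Fin n → k))) := by
  simp only [leg23, TensorProduct.map_tmul, LinearMap.id_coe, id_eq, hR,
    TensorProduct.tmul_sum, TensorProduct.tmul_smul]

private lemma leg13_basis (u v w : Fin n) :
    leg13 R ((e u : Fin n → k) ⊗ₜ[k] ((e v : Fin n → k) ⊗ₜ[k] (e w : Fin n → k))) =
    ∑ i, ∑ j, x i j u w •
      ((e i : Fin n → k) ⊗ₜ[k] ((e v : Fin n → k) ⊗ₜ[k] (e j : Fin n → k))) := by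
  simp only [leg13, leg12, LinearMap.coe_comp, LinearEquiv.coe_coe, Function.comp_apply,
    TensorProduct.map_tmul, LinearMap.id_coe, id_eq, TensorProduct.comm_tmul,
    TensorProduct.assoc_symm_tmul, hR, TensorProduct.sum_tmul, TensorProduct.smul_tmul',
    map_sum, map_smul, TensorProduct.assoc_tmul, TensorProduct.tmul_smul]

private lemma lhs_basis (u v w : Fin n) :
    (leg12 R ∘ₗ leg23 R)
        ((e u : Fin n → k) ⊗ₜ[k] ((e v : Fin n → k) ⊗ₜ[k] (e w : Fin n → k))) =
    ∑ i, ∑ j, ∑ p, ∑ q, (x i j v w * x p q u i) •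
      ((e p : Fin n → k) ⊗ₜ[k] ((e q : Fin n → k) ⊗ₜ[k] (e j : Fin n → k))) := by
  rw [LinearMap.comp_apply, leg23_basis x R hR u v w, map_sum]
  refine Finset.sum_congr rfl fun i _ => ?_
  rw [map_sum]
  refine Finset.sum_congr rfl fun j _ => ?_
  rw [map_smul, leg12_basis x R hR u i j, Finset.smul_sum]
  refine Finset.sum_congr rfl fun p _ => ?_
  rw [Finset.smul_sum]
  refine Finset.sum_congr rfl fun q _ => ?_
  rw [smul_smul]

private lemma rhs_basis (u v w : Fin n) :
    (leg13 R ∘ₗ leg12 R)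
        ((e u : Fin n → k) ⊗ₜ[k] ((e v : Fin n → k) ⊗ₜ[k] (e w : Fin n → k))) =
    ∑ i, ∑ j, ∑ p, ∑ q, (x i j u v * x p q i w) •
      ((e p : Fin n → k) ⊗ₜ[k] ((e j : Fin n → k) ⊗ₜ[k] (e q : Fin n → k))) := by
  rw [LinearMap.comp_apply, leg12_basis x R hR u v w, map_sum]
  refine Finset.sum_congr rfl fun i _ => ?_
  rw [map_sum]
  refine Finset.sum_congr rfl fun j _ => ?_
  rw [map_smul, leg13_basis x R hR i j w, Finset.smul_sum]
  refine Finset.sum_congr rfl fun p _ => ?_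
  rw [Finset.smul_sum]
  refine Finset.sum_congr rfl fun q _ => ?_
  rw [smul_smul]

end LegLemmas

end Aux

/-- `R¹²R²³ = R¹³R¹²` holds iff the multiplication
`(m_k ⊗ m_l)·(m_r ⊗ m_j) = Σ_a x^{ak}_{jl} m_r ⊗ m_a` on `M ⊗ M` is associative;
and in that case `M` is a left module over `M ⊗ M` via
`(m_k ⊗ m_l) • m_j = Σ_a x^{ak}_{jl} m_a`. -/
theorem equation_1213_iff_associative
    {n : ℕ} (hn : 0 < n) (x : Fin n → Fin n → Fin n → Fin n → k)
    (R : (Fin n → k) ⊗[k] (Fin n → k) →ₗ[k] (Fin n → k) ⊗[k] (Fin n → k))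
    (hR : ∀ u v : Fin n,
      R ((Pi.basisFun k (Fin n)) u ⊗ₜ[k] (Pi.basisFun k (Fin n)) v) =
        ∑ i, ∑ j, x i j u v • ((Pi.basisFun k (Fin n)) i ⊗ₜ[k] (Pi.basisFun k (Fin n)) j))
    (mul : (Fin n → k) ⊗[k] (Fin n → k) →ₗ[k]
      (Fin n → k) ⊗[k] (Fin n → k) →ₗ[k] (Fin n → k) ⊗[k] (Fin n → k))
    (hmul : ∀ p q r j : Fin n,
      mul ((Pi.basisFun k (Fin n)) p ⊗ₜ[k] (Pi.basisFun k (Fin n)) q)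
          ((Pi.basisFun k (Fin n)) r ⊗ₜ[k] (Pi.basisFun k (Fin n)) j) =
        ∑ a, x a p j q • ((Pi.basisFun k (Fin n)) r ⊗ₜ[k] (Pi.basisFun k (Fin n)) a))
    (act : (Fin n → k) ⊗[k] (Fin n → k) →ₗ[k] (Fin n → k) →ₗ[k] (Fin n → k))
    (hact : ∀ p q j : Fin n,
      act ((Pi.basisFun k (Fin n)) p ⊗ₜ[k] (Pi.basisFun k (Fin n)) q)
          ((Pi.basisFun k (Fin n)) j) =
        ∑ a, x a p j q • (Pi.basisFun k (Fin n)) a) :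
    ((leg12 R ∘ₗ leg23 R = leg13 R ∘ₗ leg12 R) ↔
      (∀ ξ η ζ : (Fin n → k) ⊗[k] (Fin n → k), mul (mul ξ η) ζ = mul ξ (mul η ζ))) ∧
    ((leg12 R ∘ₗ leg23 R = leg13 R ∘ₗ leg12 R) →
      ∀ (ξ η : (Fin n → k) ⊗[k] (Fin n → k)) (m : Fin n → k),
        act (mul ξ η) m = act ξ (act η m)) := by
  classical
  set E := Pi.basisFun k (Fin n) with hE
  -- Yang–Baxter in coordinates
  have hY_iff : (leg12 R ∘ₗ leg23 R = leg13 R ∘ₗ leg12 R) ↔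
      ∀ u v w p b c : Fin n,
        (∑ i, x i c v w * x p b u i) = ∑ i, x i b u v * x p c i w := by
    constructor
    · intro h u v w
      have h2 := LinearMap.congr_fun h ((E u : Fin n → k) ⊗ₜ[k] ((E v : Fin n → k) ⊗ₜ[k] (E w : Fin n → k)))
      rw [lhs_basis x R hR u v w, rhs_basis x R hR u v w] at h2
      exact (key_iff _ _).1 h2
    · intro h
      apply Module.Basis.ext (E.tensorProduct (E.tensorProduct E))
      rintro ⟨u, v, w⟩
      simp only [Module.Basis.tensorProduct_apply]
      rw [lhs_basis x R hR u v w, rhs_basis x R hR u v w]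
      exact (key_iff _ _).2 (h u v w)
  -- multiplications of basis elements
  have hmul_lhs : ∀ p q r s t u' : Fin n,
      mul (mul ((E p : Fin n → k) ⊗ₜ[k] (E q : Fin n → k)) ((E r : Fin n → k) ⊗ₜ[k] (E s : Fin n → k)))
          ((E t : Fin n → k) ⊗ₜ[k] (E u' : Fin n → k)) =
        ∑ a, ∑ b, (x a p s q * x b r u' a) • ((E t : Fin n → k) ⊗ₜ[k] (E b : Fin n → k)) := by
    intro p q r s t u'
    rw [hmul p q r s, map_sum, LinearMap.sum_apply]
    refine Finset.sum_congr rfl fun a _ => ?_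
    rw [map_smul, LinearMap.smul_apply, hmul r a t u', Finset.smul_sum]
    refine Finset.sum_congr rfl fun b _ => ?_
    rw [smul_smul]
  have hmul_rhs : ∀ p q r s t u' : Fin n,
      mul ((E p : Fin n → k) ⊗ₜ[k] (E q : Fin n → k))
          (mul ((E r : Fin n → k) ⊗ₜ[k] (E s : Fin n → k)) ((E t : Fin n → k) ⊗ₜ[k] (E u' : Fin n → k))) =
        ∑ a, ∑ b, (x a r u' s * x b p a q) • ((E t : Fin n → k) ⊗ₜ[k] (E b : Fin n → k)) := by
    intro p q r s t u'
    rw [hmul r s t u', map_sum]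
    refine Finset.sum_congr rfl fun a _ => ?_
    rw [map_smul, hmul p q t a, Finset.smul_sum]
    refine Finset.sum_congr rfl fun b _ => ?_
    rw [smul_smul]
  -- basis associativity from Y
  have hbasic_of_Y :
      (∀ u v w p b c : Fin n, (∑ i, x i c v w * x p b u i) = ∑ i, x i b u v * x p c i w) →
      ∀ p q r s t u' : Fin n,
        mul (mul ((E p : Fin n → k) ⊗ₜ[k] (E q : Fin n → k)) ((E r : Fin n → k) ⊗ₜ[k] (E s : Fin n → k)))
            ((E t : Fin n → k) ⊗ₜ[k] (E u' : Fin n → k)) =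
        mul ((E p : Fin n → k) ⊗ₜ[k] (E q : Fin n → k))
            (mul ((E r : Fin n → k) ⊗ₜ[k] (E s : Fin n → k)) ((E t : Fin n → k) ⊗ₜ[k] (E u' : Fin n → k))) := by
    intro hY p q r s t u'
    rw [hmul_lhs p q r s t u', hmul_rhs p q r s t u']
    exact (key2_iff t _ _).2 fun b => hY u' s q b r p
  -- Y from full associativity
  have hY_of_assoc :
      (∀ ξ η ζ : (Fin n → k) ⊗[k] (Fin n → k), mul (mul ξ η) ζ = mul ξ (mul η ζ)) →
      ∀ u v w p b c : Fin n, (∑ i, x i c v w * x p b u i) = ∑ i, x i b u v * x p c i w := by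
    intro h u v w p b c
    set t : Fin n := ⟨0, hn⟩
    have h2 := h ((E c : Fin n → k) ⊗ₜ[k] (E w : Fin n → k)) ((E b : Fin n → k) ⊗ₜ[k] (E v : Fin n → k))
      ((E t : Fin n → k) ⊗ₜ[k] (E u : Fin n → k))
    rw [hmul_lhs c w b v t u, hmul_rhs c w b v t u] at h2
    exact (key2_iff t _ _).1 h2 p
  -- extension of basis associativity to all elements
  have hext :
      (∀ p q r s t u' : Fin n,
        mul (mul ((E p : Fin n → k) ⊗ₜ[k] (E q : Fin n → k)) ((E r : Fin n → k) ⊗ₜ[k] (E s : Fin n → k)))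
            ((E t : Fin n → k) ⊗ₜ[k] (E u' : Fin n → k)) =
        mul ((E p : Fin n → k) ⊗ₜ[k] (E q : Fin n → k))
            (mul ((E r : Fin n → k) ⊗ₜ[k] (E s : Fin n → k)) ((E t : Fin n → k) ⊗ₜ[k] (E u' : Fin n → k)))) →
      ∀ ξ η ζ : (Fin n → k) ⊗[k] (Fin n → k), mul (mul ξ η) ζ = mul ξ (mul η ζ) := by
    intro hb
    have step1 : ∀ (ξ : (Fin n → k) ⊗[k] (Fin n → k)) (c d a b : Fin n),
        mul (mul ξ ((E c : Fin n → k) ⊗ₜ[k] (E d : Fin n → k))) ((E a : Fin n → k) ⊗ₜ[k] (E b : Fin n → k)) =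
        mul ξ (mul ((E c : Fin n → k) ⊗ₜ[k] (E d : Fin n → k)) ((E a : Fin n → k) ⊗ₜ[k] (E b : Fin n → k))) := by
      intro ξ c d a b
      have h3 : (mul.flip ((E a : Fin n → k) ⊗ₜ[k] (E b : Fin n → k))) ∘ₗ
          (mul.flip ((E c : Fin n → k) ⊗ₜ[k] (E d : Fin n → k))) =
          mul.flip (mul ((E c : Fin n → k) ⊗ₜ[k] (E d : Fin n → k)) ((E a : Fin n → k) ⊗ₜ[k] (E b : Fin n → k))) := by
        apply ext2'
        intro p q
        simpa [hE] using hb p q c d a b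
      simpa using LinearMap.congr_fun h3 ξ
    have step2 : ∀ (ξ η : (Fin n → k) ⊗[k] (Fin n → k)) (a b : Fin n),
        mul (mul ξ η) ((E a : Fin n → k) ⊗ₜ[k] (E b : Fin n → k)) =
        mul ξ (mul η ((E a : Fin n → k) ⊗ₜ[k] (E b : Fin n → k))) := by
      intro ξ η a b
      have h3 : (mul.flip ((E a : Fin n → k) ⊗ₜ[k] (E b : Fin n → k))) ∘ₗ (mul ξ) =
          (mul ξ) ∘ₗ (mul.flip ((E a : Fin n → k) ⊗ₜ[k] (E b : Fin n → k))) := by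
        apply ext2'
        intro c d
        simpa [hE] using step1 ξ c d a b
      simpa using LinearMap.congr_fun h3 η
    intro ξ η ζ
    have h3 : mul (mul ξ η) = (mul ξ) ∘ₗ (mul η) := by
      apply ext2'
      intro a b
      simpa [hE] using step2 ξ η a b
    simpa using LinearMap.congr_fun h3 ζ
  refine ⟨⟨fun hop => hext (hbasic_of_Y (hY_iff.1 hop)), fun h => hY_iff.2 (hY_of_assoc h)⟩, ?_⟩
  -- the module part
  intro hop
  have hY := hY_iff.1 hop
  have hact_basis : ∀ p q r s t : Fin n,
      act (mul ((E p : Fin n → k) ⊗ₜ[k] (E q : Fin n → k)) ((E r : Fin n → k) ⊗ₜ[k] (E s : Fin n → k)))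
          ((E t : Fin n → k)) =
      act ((E p : Fin n → k) ⊗ₜ[k] (E q : Fin n → k))
          (act ((E r : Fin n → k) ⊗ₜ[k] (E s : Fin n → k)) ((E t : Fin n → k))) := by
    intro p q r s t
    have hL : act (mul ((E p : Fin n → k) ⊗ₜ[k] (E q : Fin n → k)) ((E r : Fin n → k) ⊗ₜ[k] (E s : Fin n → k)))
        ((E t : Fin n → k)) = ∑ a, ∑ b, (x a p s q * x b r t a) • (E b : Fin n → k) := by
      rw [hmul p q r s, map_sum, LinearMap.sum_apply]
      refine Finset.sum_congr rfl fun a _ => ?_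
      rw [map_smul, LinearMap.smul_apply, hact r a t, Finset.smul_sum]
      refine Finset.sum_congr rfl fun b _ => ?_
      rw [smul_smul]
    have hRt : act ((E p : Fin n → k) ⊗ₜ[k] (E q : Fin n → k))
        (act ((E r : Fin n → k) ⊗ₜ[k] (E s : Fin n → k)) ((E t : Fin n → k))) =
        ∑ a, ∑ b, (x a r t s * x b p a q) • (E b : Fin n → k) := by
      rw [hact r s t, map_sum]
      refine Finset.sum_congr rfl fun a _ => ?_
      rw [map_smul, hact p q a, Finset.smul_sum]
      refine Finset.sum_congr rfl fun b _ => ?_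
      rw [smul_smul]
    rw [hL, hRt]
    exact key1 _ _ fun b => hY t s q b r p
  -- extension
  have step1 : ∀ (ξ : (Fin n → k) ⊗[k] (Fin n → k)) (c d t : Fin n),
      act (mul ξ ((E c : Fin n → k) ⊗ₜ[k] (E d : Fin n → k))) ((E t : Fin n → k)) =
      act ξ (act ((E c : Fin n → k) ⊗ₜ[k] (E d : Fin n → k)) ((E t : Fin n → k))) := by
    intro ξ c d t
    have h3 : (act.flip ((E t : Fin n → k))) ∘ₗ (mul.flip ((E c : Fin n → k) ⊗ₜ[k] (E d : Fin n → k))) =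
        act.flip (act ((E c : Fin n → k) ⊗ₜ[k] (E d : Fin n → k)) ((E t : Fin n → k))) := by
      apply ext2'
      intro p q
      simpa [hE] using hact_basis p q c d t
    simpa using LinearMap.congr_fun h3 ξ
  have step2 : ∀ (ξ η : (Fin n → k) ⊗[k] (Fin n → k)) (t : Fin n),
      act (mul ξ η) ((E t : Fin n → k)) = act ξ (act η ((E t : Fin n → k))) := by
    intro ξ η t
    have h3 : (act.flip ((E t : Fin n → k))) ∘ₗ (mul ξ) =
        (act ξ) ∘ₗ (act.flip ((E t : Fin n → k))) := by
      apply ext2'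
      intro c d
      simpa [hE] using step1 ξ c d t
    simpa using LinearMap.congr_fun h3 η
  intro ξ η m
  have h3 : act (mul ξ η) = (act ξ) ∘ₗ (act η) := by
    apply Module.Basis.ext E
    intro t
    simpa [hE] using step2 ξ η t
  simpa using LinearMap.congr_fun h3 m
end

section
/- Let k be a commutative ring, C a k-coalgebra with comultiplication Δ(c) = Σ c₁⊗c₂ and counit ε, and σ: C⊗C → k a k-linear FS-map, i.e. Σ σ(c⊗d₁)d₂ = Σ σ(c₂⊗d)c₁ in C for all c,d ∈ C. Let M be a right C-comodule: a k-module with a k-linear coaction ρ: M → M⊗C, ρ(m) = Σ m₀⊗m₁, satisfying (ρ⊗I_C)∘ρ = (I_M⊗Δ)∘ρ and (I_M⊗ε)∘ρ = I_M. Then the k-linear map R_σ: M⊗M → M⊗M, R_σ(m⊗n) = Σ σ(m₁⊗n₁) m₀⊗n₀, satisfies the FS-equation R_σ¹²R_σ²³ = R_σ²³R_σ¹³ = R_σ¹³R_σ¹² on M⊗M⊗M. -/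
open TensorProduct

variable {k M : Type*} [CommRing k] [AddCommGroup M] [Module k M]

section FSaux

variable {k C M : Type*} [CommRing k] [AddCommGroup C] [Module k C]
  [AddCommGroup M] [Module k M]

/-- `Φ((a⊗x)⊗(b⊗y)) = σ(x⊗y) • (a⊗b)` -/
noncomputable def PhiFS (σ : C ⊗[k] C →ₗ[k] k) :
    (M ⊗[k] C) ⊗[k] (M ⊗[k] C) →ₗ[k] M ⊗[k] M :=
  (TensorProduct.rid k (M ⊗[k] M)).toLinearMap ∘ₗ
    (TensorProduct.map LinearMap.id σ) ∘ₗ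
    (TensorProduct.tensorTensorTensorComm k M C M C).toLinearMap

@[simp] lemma PhiFS_tmul (σ : C ⊗[k] C →ₗ[k] k) (a b : M) (x y : C) :
    PhiFS σ ((a ⊗ₜ[k] x) ⊗ₜ[k] (b ⊗ₜ[k] y)) = σ (x ⊗ₜ y) • (a ⊗ₜ[k] b) := by
  simp [PhiFS]

noncomputable def fs1 (σ : C ⊗[k] C →ₗ[k] k) (x z : C) : C ⊗[k] C →ₗ[k] k :=
  LinearMap.mul' k k ∘ₗ
    TensorProduct.map (σ ∘ₗ TensorProduct.mk k C C x) (σ ∘ₗ (TensorProduct.mk k C C).flip z)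
noncomputable def fs2 (σ : C ⊗[k] C →ₗ[k] k) (x y : C) : C ⊗[k] C →ₗ[k] k :=
  LinearMap.mul' k k ∘ₗ
    TensorProduct.map (σ ∘ₗ TensorProduct.mk k C C y) (σ ∘ₗ TensorProduct.mk k C C x)
noncomputable def fs3 (σ : C ⊗[k] C →ₗ[k] k) (y z : C) : C ⊗[k] C →ₗ[k] k :=
  LinearMap.mul' k k ∘ₗ
    TensorProduct.map (σ ∘ₗ (TensorProduct.mk k C C).flip z) (σ ∘ₗ (TensorProduct.mk k C C).flip y)

@[simp] lemma fs1_tmul (σ : C ⊗[k] C →ₗ[k] k) (x z y y' : C) :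
    fs1 σ x z (y ⊗ₜ y') = σ (x ⊗ₜ y) * σ (y' ⊗ₜ z) := by simp [fs1]
@[simp] lemma fs2_tmul (σ : C ⊗[k] C →ₗ[k] k) (x y z z' : C) :
    fs2 σ x y (z ⊗ₜ z') = σ (y ⊗ₜ z) * σ (x ⊗ₜ z') := by simp [fs2]
@[simp] lemma fs3_tmul (σ : C ⊗[k] C →ₗ[k] k) (y z x₁ x₂ : C) :
    fs3 σ y z (x₁ ⊗ₜ x₂) = σ (x₁ ⊗ₜ z) * σ (x₂ ⊗ₜ y) := by simp [fs3]

/-- `Ξ₁(q ⊗ y) = σ(y⊗z) • assoc(Φ(q₀⊗q) ⊗ c)` -/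
noncomputable def Xi1 (σ : C ⊗[k] C →ₗ[k] k) (q₀ : M ⊗[k] C) (c : M) (z : C) :
    (M ⊗[k] C) ⊗[k] C →ₗ[k] M ⊗[k] (M ⊗[k] M) :=
  (TensorProduct.assoc k M M M).toLinearMap ∘ₗ
    (TensorProduct.mk k (M ⊗[k] M) M).flip c ∘ₗ
    (TensorProduct.rid k (M ⊗[k] M)).toLinearMap ∘ₗ
    TensorProduct.map LinearMap.id (σ ∘ₗ (TensorProduct.mk k C C).flip z) ∘ₗ
    TensorProduct.map (PhiFS σ ∘ₗ TensorProduct.mk k (M ⊗[k] C) (M ⊗[k] C) q₀) LinearMap.id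

@[simp] lemma Xi1_tmul (σ : C ⊗[k] C →ₗ[k] k) (q₀ : M ⊗[k] C) (c : M) (z : C)
    (q : M ⊗[k] C) (y : C) :
    Xi1 σ q₀ c z (q ⊗ₜ y) =
      σ (y ⊗ₜ z) • (TensorProduct.assoc k M M M) ((PhiFS σ (q₀ ⊗ₜ q)) ⊗ₜ c) := by
  simp [Xi1, ← smul_tmul']

/-- `Ξ₂(q ⊗ z) = σ(x⊗z) • (a ⊗ Φ(q₀⊗q))` -/
noncomputable def Xi2 (σ : C ⊗[k] C →ₗ[k] k) (q₀ : M ⊗[k] C) (a : M) (x : C) :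
    (M ⊗[k] C) ⊗[k] C →ₗ[k] M ⊗[k] (M ⊗[k] M) :=
  TensorProduct.mk k M (M ⊗[k] M) a ∘ₗ
    (TensorProduct.rid k (M ⊗[k] M)).toLinearMap ∘ₗ
    TensorProduct.map LinearMap.id (σ ∘ₗ TensorProduct.mk k C C x) ∘ₗ
    TensorProduct.map (PhiFS σ ∘ₗ TensorProduct.mk k (M ⊗[k] C) (M ⊗[k] C) q₀) LinearMap.id

@[simp] lemma Xi2_tmul (σ : C ⊗[k] C →ₗ[k] k) (q₀ : M ⊗[k] C) (a : M) (x : C)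
    (q : M ⊗[k] C) (z : C) :
    Xi2 σ q₀ a x (q ⊗ₜ z) = σ (x ⊗ₜ z) • (a ⊗ₜ (PhiFS σ (q₀ ⊗ₜ q))) := by
  simp [Xi2]

/-- `Ξ₃(q ⊗ x) = σ(x⊗y) • (I⊗τ)(assoc(Φ(q⊗r₀) ⊗ b))` -/
noncomputable def Xi3 (σ : C ⊗[k] C →ₗ[k] k) (r₀ : M ⊗[k] C) (b : M) (y : C) :
    (M ⊗[k] C) ⊗[k] C →ₗ[k] M ⊗[k] (M ⊗[k] M) :=
  (TensorProduct.map LinearMap.id (TensorProduct.comm k M M).toLinearMap) ∘ₗ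
    (TensorProduct.assoc k M M M).toLinearMap ∘ₗ
    (TensorProduct.mk k (M ⊗[k] M) M).flip b ∘ₗ
    (TensorProduct.rid k (M ⊗[k] M)).toLinearMap ∘ₗ
    TensorProduct.map LinearMap.id (σ ∘ₗ (TensorProduct.mk k C C).flip y) ∘ₗ
    TensorProduct.map (PhiFS σ ∘ₗ (TensorProduct.mk k (M ⊗[k] C) (M ⊗[k] C)).flip r₀)
      LinearMap.id

@[simp] lemma Xi3_tmul (σ : C ⊗[k] C →ₗ[k] k) (r₀ : M ⊗[k] C) (b : M) (y : C)
    (q : M ⊗[k] C) (x : C) :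
    Xi3 σ r₀ b y (q ⊗ₜ x) =
      σ (x ⊗ₜ y) • (TensorProduct.map LinearMap.id (TensorProduct.comm k M M).toLinearMap)
        ((TensorProduct.assoc k M M M) ((PhiFS σ (q ⊗ₜ r₀)) ⊗ₜ b)) := by
  simp [Xi3, ← smul_tmul']

lemma leg12_tmul (R : M ⊗[k] M →ₗ[k] M ⊗[k] M) (u v w : M) :
    leg12 R (u ⊗ₜ (v ⊗ₜ w)) = (TensorProduct.assoc k M M M) (R (u ⊗ₜ v) ⊗ₜ w) := by
  simp [leg12]

lemma leg23_tmul (R : M ⊗[k] M →ₗ[k] M ⊗[k] M) (u : M) (t : M ⊗[k] M) :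
    leg23 R (u ⊗ₜ t) = u ⊗ₜ R t := by
  simp [leg23]

lemma leg13_tmul (R : M ⊗[k] M →ₗ[k] M ⊗[k] M) (u v w : M) :
    leg13 R (u ⊗ₜ (v ⊗ₜ w)) =
      (TensorProduct.map LinearMap.id (TensorProduct.comm k M M).toLinearMap)
        ((TensorProduct.assoc k M M M) (R (u ⊗ₜ w) ⊗ₜ v)) := by
  simp [leg13, leg12]


variable [Coalgebra k C]

lemma key12 (σ : C ⊗[k] C →ₗ[k] k)
    (hσ : ∀ c d : C,
      (TensorProduct.lid k C)
          ((TensorProduct.map (σ ∘ₗ TensorProduct.mk k C C c) LinearMap.id)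
            (Coalgebra.comul d)) =
        (TensorProduct.rid k C)
          ((TensorProduct.map LinearMap.id (σ ∘ₗ (TensorProduct.mk k C C).flip d))
            (Coalgebra.comul c))) (x y z : C) :
    fs1 σ x z (Coalgebra.comul y) = fs2 σ x y (Coalgebra.comul z) := by
  have e1 : ∀ w : C ⊗[k] C, fs1 σ x z w =
      σ (x ⊗ₜ (TensorProduct.rid k C)
        ((TensorProduct.map LinearMap.id (σ ∘ₗ (TensorProduct.mk k C C).flip z)) w)) := by
    intro w
    induction w using TensorProduct.induction_on with
    | zero => simp [fs1]
    | tmul a b => simp [fs1, tmul_smul, mul_comm]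
    | add a b ha hb => simp [map_add, tmul_add, ha, hb]
  have e2 : ∀ w : C ⊗[k] C, fs2 σ x y w =
      σ (x ⊗ₜ (TensorProduct.lid k C)
        ((TensorProduct.map (σ ∘ₗ TensorProduct.mk k C C y) LinearMap.id) w)) := by
    intro w
    induction w using TensorProduct.induction_on with
    | zero => simp [fs2]
    | tmul a b => simp [fs2, tmul_smul]
    | add a b ha hb => simp [map_add, tmul_add, ha, hb]
  rw [e1, e2, ← hσ y z]

lemma key13 (σ : C ⊗[k] C →ₗ[k] k)
    (hσ : ∀ c d : C,
      (TensorProduct.lid k C)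
          ((TensorProduct.map (σ ∘ₗ TensorProduct.mk k C C c) LinearMap.id)
            (Coalgebra.comul d)) =
        (TensorProduct.rid k C)
          ((TensorProduct.map LinearMap.id (σ ∘ₗ (TensorProduct.mk k C C).flip d))
            (Coalgebra.comul c))) (x y z : C) :
    fs1 σ x z (Coalgebra.comul y) = fs3 σ y z (Coalgebra.comul x) := by
  have e3 : ∀ w : C ⊗[k] C, fs1 σ x z w =
      σ (((TensorProduct.lid k C)
        ((TensorProduct.map (σ ∘ₗ TensorProduct.mk k C C x) LinearMap.id) w)) ⊗ₜ z) := by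
    intro w
    induction w using TensorProduct.induction_on with
    | zero => simp [fs1]
    | tmul a b => simp [fs1, ← smul_tmul', mul_comm]
    | add a b ha hb => simp [map_add, add_tmul, ha, hb]
  have e4 : ∀ w : C ⊗[k] C, fs3 σ y z w =
      σ (((TensorProduct.rid k C)
        ((TensorProduct.map LinearMap.id (σ ∘ₗ (TensorProduct.mk k C C).flip y)) w)) ⊗ₜ z) := by
    intro w
    induction w using TensorProduct.induction_on with
    | zero => simp [fs3]
    | tmul a b => simp [fs3, ← smul_tmul', mul_comm]
    | add a b ha hb => simp [map_add, add_tmul, ha, hb]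
  rw [e3, e4, hσ x y]

lemma Xi1_sum (σ : C ⊗[k] C →ₗ[k] k) (q₀ : M ⊗[k] C) (S U : Finset (M × C))
    (hm : q₀ = ∑ i ∈ S, i.1 ⊗ₜ i.2) (b : M) (w : C ⊗[k] C) :
    (∑ l ∈ U, Xi1 σ q₀ l.1 l.2) ((TensorProduct.assoc k M C C).symm (b ⊗ₜ w)) =
      ∑ i ∈ S, ∑ l ∈ U, fs1 σ i.2 l.2 w • (i.1 ⊗ₜ (b ⊗ₜ l.1)) := by
  induction w using TensorProduct.induction_on with
  | zero => simp
  | tmul y y' =>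
      simp only [assoc_symm_tmul, LinearMap.sum_apply, Xi1_tmul, fs1_tmul]
      rw [hm]
      simp only [sum_tmul, map_sum, PhiFS_tmul, LinearMap.map_smul, smul_tmul',
        Finset.smul_sum, assoc_tmul, smul_smul]
      rw [Finset.sum_comm]
      refine Finset.sum_congr rfl fun i _ => Finset.sum_congr rfl fun l _ => ?_
      rw [mul_comm]
  | add w1 w2 h1 h2 =>
      simp only [tmul_add, map_add, h1, h2, map_add, ← Finset.sum_add_distrib, ← add_smul]

lemma Xi2_sum (σ : C ⊗[k] C →ₗ[k] k) (q₀ : M ⊗[k] C) (S T : Finset (M × C))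
    (hn : q₀ = ∑ j ∈ T, j.1 ⊗ₜ j.2) (c : M) (w : C ⊗[k] C) :
    (∑ i ∈ S, Xi2 σ q₀ i.1 i.2) ((TensorProduct.assoc k M C C).symm (c ⊗ₜ w)) =
      ∑ i ∈ S, ∑ j ∈ T, fs2 σ i.2 j.2 w • (i.1 ⊗ₜ (j.1 ⊗ₜ c)) := by
  induction w using TensorProduct.induction_on with
  | zero => simp
  | tmul z z' =>
      simp only [assoc_symm_tmul, LinearMap.sum_apply, Xi2_tmul, fs2_tmul]
      rw [hn]
      simp only [sum_tmul, map_sum, PhiFS_tmul, tmul_sum, tmul_smul,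
        Finset.smul_sum, smul_smul]
      refine Finset.sum_congr rfl fun i _ => Finset.sum_congr rfl fun j _ => ?_
      rw [mul_comm]
  | add w1 w2 h1 h2 =>
      simp only [tmul_add, map_add, h1, h2, ← Finset.sum_add_distrib, ← add_smul]

lemma Xi3_sum (σ : C ⊗[k] C →ₗ[k] k) (r₀ : M ⊗[k] C) (T U : Finset (M × C))
    (hp : r₀ = ∑ l ∈ U, l.1 ⊗ₜ l.2) (a : M) (w : C ⊗[k] C) :
    (∑ j ∈ T, Xi3 σ r₀ j.1 j.2) ((TensorProduct.assoc k M C C).symm (a ⊗ₜ w)) =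
      ∑ j ∈ T, ∑ l ∈ U, fs3 σ j.2 l.2 w • (a ⊗ₜ (j.1 ⊗ₜ l.1)) := by
  induction w using TensorProduct.induction_on with
  | zero => simp
  | tmul x x' =>
      simp only [assoc_symm_tmul, LinearMap.sum_apply, Xi3_tmul, fs3_tmul]
      rw [hp]
      simp only [tmul_sum, map_sum, PhiFS_tmul, sum_tmul, smul_tmul',
        LinearMap.map_smul, LinearEquiv.map_smul, Finset.smul_sum, assoc_tmul,
        map_tmul, comm_tmul, LinearMap.id_coe, id_eq, smul_smul]
      refine Finset.sum_congr rfl fun j _ => Finset.sum_congr rfl fun l _ => ?_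
      rw [mul_comm]
      simp
  | add w1 w2 h1 h2 =>
      simp only [tmul_add, map_add, h1, h2, ← Finset.sum_add_distrib, ← add_smul]

end FSaux

/-- If `σ : C ⊗ C → k` is an FS-map on a coalgebra `C` and `M` is a right
`C`-comodule, then `R_σ(m ⊗ n) = Σ σ(m₁ ⊗ n₁) m₀ ⊗ n₀` satisfies the FS-equation. -/
theorem FS_map_gives_FS_solution
    {C : Type*} [AddCommGroup C] [Module k C] [Coalgebra k C]
    (σ : C ⊗[k] C →ₗ[k] k)
    (hσ : ∀ c d : C,
      (TensorProduct.lid k C)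
          ((TensorProduct.map (σ ∘ₗ TensorProduct.mk k C C c) LinearMap.id)
            (Coalgebra.comul d)) =
        (TensorProduct.rid k C)
          ((TensorProduct.map LinearMap.id (σ ∘ₗ (TensorProduct.mk k C C).flip d))
            (Coalgebra.comul c)))
    (ρ : M →ₗ[k] M ⊗[k] C)
    (hcoassoc : (TensorProduct.assoc k M C C).toLinearMap ∘ₗ
        (TensorProduct.map ρ LinearMap.id) ∘ₗ ρ =
      (TensorProduct.map LinearMap.id Coalgebra.comul) ∘ₗ ρ)
    (hcounit : ∀ m : M,
      (TensorProduct.rid k M)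
        ((TensorProduct.map LinearMap.id Coalgebra.counit) (ρ m)) = m) :
    ∀ R : M ⊗[k] M →ₗ[k] M ⊗[k] M,
      R = (TensorProduct.rid k (M ⊗[k] M)).toLinearMap ∘ₗ
            (TensorProduct.map LinearMap.id σ) ∘ₗ
            (TensorProduct.tensorTensorTensorComm k M C M C).toLinearMap ∘ₗ
            (TensorProduct.map ρ ρ) →
      leg12 R ∘ₗ leg23 R = leg23 R ∘ₗ leg13 R ∧
        leg23 R ∘ₗ leg13 R = leg13 R ∘ₗ leg12 R := by
  intro R hR
  have hRt : ∀ u v : M, R (u ⊗ₜ[k] v) = PhiFS σ (ρ u ⊗ₜ ρ v) := by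
    intro u v; rw [hR]; simp [PhiFS]
  have hco : ∀ u : M, (TensorProduct.map ρ LinearMap.id) (ρ u) =
      (TensorProduct.assoc k M C C).symm
        ((TensorProduct.map LinearMap.id Coalgebra.comul) (ρ u)) := by
    intro u
    have h := LinearMap.congr_fun hcoassoc u
    simp only [LinearMap.comp_apply, LinearEquiv.coe_coe] at h
    rw [← h, LinearEquiv.symm_apply_apply]
  have E : ∀ m n p : M,
      leg12 R (leg23 R (m ⊗ₜ[k] (n ⊗ₜ[k] p))) = leg23 R (leg13 R (m ⊗ₜ[k] (n ⊗ₜ[k] p))) ∧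
      leg23 R (leg13 R (m ⊗ₜ[k] (n ⊗ₜ[k] p))) = leg13 R (leg12 R (m ⊗ₜ[k] (n ⊗ₜ[k] p))) := by
    intro m n p
    obtain ⟨S, hm⟩ := TensorProduct.exists_finset (ρ m)
    obtain ⟨T, hn⟩ := TensorProduct.exists_finset (ρ n)
    obtain ⟨U, hp⟩ := TensorProduct.exists_finset (ρ p)
    have L1 : leg12 R (leg23 R (m ⊗ₜ[k] (n ⊗ₜ[k] p))) =
        ∑ i ∈ S, ∑ j ∈ T, ∑ l ∈ U,
          fs1 σ i.2 l.2 (Coalgebra.comul j.2) • (i.1 ⊗ₜ[k] (j.1 ⊗ₜ[k] l.1)) := by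
      calc leg12 R (leg23 R (m ⊗ₜ[k] (n ⊗ₜ[k] p)))
          = (∑ l ∈ U, Xi1 σ (ρ m) l.1 l.2) ((TensorProduct.map ρ LinearMap.id) (ρ n)) := by
            rw [leg23_tmul, hRt n p]
            conv_lhs => rw [hn, hp]
            conv_rhs => rw [hn]
            simp only [sum_tmul, tmul_sum, map_sum, PhiFS_tmul, tmul_smul,
              LinearMap.map_smul, leg12_tmul, hRt,
              LinearMap.sum_apply, Xi1_tmul, map_tmul, LinearMap.id_coe, id_eq]
            rw [Finset.sum_comm]
        _ = ∑ j ∈ T, (∑ l ∈ U, Xi1 σ (ρ m) l.1 l.2)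
              ((TensorProduct.assoc k M C C).symm (j.1 ⊗ₜ[k] Coalgebra.comul j.2)) := by
            rw [hco n]
            conv_lhs => rw [hn]
            simp only [map_sum, map_tmul, LinearMap.id_coe, id_eq]
        _ = ∑ j ∈ T, ∑ i ∈ S, ∑ l ∈ U,
              fs1 σ i.2 l.2 (Coalgebra.comul j.2) • (i.1 ⊗ₜ[k] (j.1 ⊗ₜ[k] l.1)) :=
            Finset.sum_congr rfl fun j _ => Xi1_sum σ (ρ m) S U hm j.1 _
        _ = ∑ i ∈ S, ∑ j ∈ T, ∑ l ∈ U,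
              fs1 σ i.2 l.2 (Coalgebra.comul j.2) • (i.1 ⊗ₜ[k] (j.1 ⊗ₜ[k] l.1)) :=
            Finset.sum_comm
    have L2 : leg23 R (leg13 R (m ⊗ₜ[k] (n ⊗ₜ[k] p))) =
        ∑ i ∈ S, ∑ j ∈ T, ∑ l ∈ U,
          fs2 σ i.2 j.2 (Coalgebra.comul l.2) • (i.1 ⊗ₜ[k] (j.1 ⊗ₜ[k] l.1)) := by
      calc leg23 R (leg13 R (m ⊗ₜ[k] (n ⊗ₜ[k] p)))
          = (∑ i ∈ S, Xi2 σ (ρ n) i.1 i.2) ((TensorProduct.map ρ LinearMap.id) (ρ p)) := by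
            rw [leg13_tmul, hRt m p]
            conv_lhs => rw [hm, hp]
            conv_rhs => rw [hp]
            simp only [sum_tmul, tmul_sum, map_sum, PhiFS_tmul, tmul_smul, ← smul_tmul',
              LinearMap.map_smul, LinearEquiv.map_smul, assoc_tmul, map_tmul, comm_tmul,
              LinearMap.id_coe, id_eq, LinearEquiv.coe_coe, leg23_tmul, hRt,
              LinearMap.sum_apply, Xi2_tmul]
        _ = ∑ l ∈ U, (∑ i ∈ S, Xi2 σ (ρ n) i.1 i.2)
              ((TensorProduct.assoc k M C C).symm (l.1 ⊗ₜ[k] Coalgebra.comul l.2)) := by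
            rw [hco p]
            conv_lhs => rw [hp]
            simp only [map_sum, map_tmul, LinearMap.id_coe, id_eq]
        _ = ∑ l ∈ U, ∑ i ∈ S, ∑ j ∈ T,
              fs2 σ i.2 j.2 (Coalgebra.comul l.2) • (i.1 ⊗ₜ[k] (j.1 ⊗ₜ[k] l.1)) :=
            Finset.sum_congr rfl fun l _ => Xi2_sum σ (ρ n) S T hn l.1 _
        _ = ∑ i ∈ S, ∑ j ∈ T, ∑ l ∈ U,
              fs2 σ i.2 j.2 (Coalgebra.comul l.2) • (i.1 ⊗ₜ[k] (j.1 ⊗ₜ[k] l.1)) := by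
            rw [Finset.sum_comm]
            exact Finset.sum_congr rfl fun i _ => Finset.sum_comm
    have L3 : leg13 R (leg12 R (m ⊗ₜ[k] (n ⊗ₜ[k] p))) =
        ∑ i ∈ S, ∑ j ∈ T, ∑ l ∈ U,
          fs3 σ j.2 l.2 (Coalgebra.comul i.2) • (i.1 ⊗ₜ[k] (j.1 ⊗ₜ[k] l.1)) := by
      calc leg13 R (leg12 R (m ⊗ₜ[k] (n ⊗ₜ[k] p)))
          = (∑ j ∈ T, Xi3 σ (ρ p) j.1 j.2) ((TensorProduct.map ρ LinearMap.id) (ρ m)) := by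
            rw [leg12_tmul, hRt m n]
            conv_lhs => rw [hm, hn]
            conv_rhs => rw [hm]
            simp only [sum_tmul, tmul_sum, map_sum, PhiFS_tmul, tmul_smul, ← smul_tmul',
              LinearMap.map_smul, LinearEquiv.map_smul, assoc_tmul, map_tmul, comm_tmul,
              LinearMap.id_coe, id_eq, LinearEquiv.coe_coe, leg13_tmul, hRt,
              LinearMap.sum_apply, Xi3_tmul]
            rw [Finset.sum_comm]
        _ = ∑ i ∈ S, (∑ j ∈ T, Xi3 σ (ρ p) j.1 j.2)
              ((TensorProduct.assoc k M C C).symm (i.1 ⊗ₜ[k] Coalgebra.comul i.2)) := by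
            rw [hco m]
            conv_lhs => rw [hm]
            simp only [map_sum, map_tmul, LinearMap.id_coe, id_eq]
        _ = ∑ i ∈ S, ∑ j ∈ T, ∑ l ∈ U,
              fs3 σ j.2 l.2 (Coalgebra.comul i.2) • (i.1 ⊗ₜ[k] (j.1 ⊗ₜ[k] l.1)) :=
            Finset.sum_congr rfl fun i _ => Xi3_sum σ (ρ p) T U hp i.1 _
    refine ⟨?_, ?_⟩
    · rw [L1, L2]
      exact Finset.sum_congr rfl fun i _ => Finset.sum_congr rfl fun j _ =>
        Finset.sum_congr rfl fun l _ => by rw [key12 σ hσ i.2 j.2 l.2]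
    · rw [L2, L3]
      refine Finset.sum_congr rfl fun i _ => Finset.sum_congr rfl fun j _ =>
        Finset.sum_congr rfl fun l _ => ?_
      rw [← key12 σ hσ i.2 j.2 l.2, key13 σ hσ i.2 j.2 l.2]
  constructor
  · ext m n p
    simpa using (E m n p).1
  · ext m n p
    simpa using (E m n p).2
end

section
/- Let k be a commutative ring, n a positive integer, φ: {1,…,n} → {1,…,n} a function with φ∘φ = φ, and M = k^n free with basis m₁,…,m_n. Define the k-linear map R^φ: M⊗M → M⊗M by R^φ(m_i⊗m_j) = δ_{ij} Σ_{a,b ∈ φ⁻¹(i)} m_a⊗m_b (the sum over all pairs a,b with φ(a) = φ(b) = i, and 0 when i ≠ j). Then R^φ satisfies the FS-equation: (R^φ)¹²(R^φ)²³ = (R^φ)²³(R^φ)¹³ = (R^φ)¹³(R^φ)¹² on M⊗M⊗M. -/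
open TensorProduct

variable {k M : Type*} [CommRing k] [AddCommGroup M] [Module k M]

open Finset in
private lemma FS_fix {n : ℕ} {φ : Fin n → Fin n} (hφ : φ ∘ φ = φ) {i c : Fin n}
    (h : φ c = i) : φ i = i := by
  have := congrFun hφ c
  simp only [Function.comp_apply, h] at this
  exact this

open Finset in
private lemma FS_empty {n : ℕ} {φ : Fin n → Fin n} (hφ : φ ∘ φ = φ) {i : Fin n}
    (h : φ i ≠ i) : univ.filter (fun a => φ a = i) = (∅ : Finset (Fin n)) := by
  ext c
  simp only [mem_filter, mem_univ, true_and, notMem_empty, iff_false]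
  intro hc
  exact h (FS_fix hφ hc)

private lemma FS_rev3 {α β : Type*} [AddCommMonoid β] (s : Finset α) (f : α → α → α → β) :
    ∑ a ∈ s, ∑ b ∈ s, ∑ c ∈ s, f a b c = ∑ c ∈ s, ∑ b ∈ s, ∑ a ∈ s, f a b c := by
  rw [show (∑ a ∈ s, ∑ b ∈ s, ∑ c ∈ s, f a b c) = ∑ a ∈ s, ∑ c ∈ s, ∑ b ∈ s, f a b c from
    Finset.sum_congr rfl fun a _ => Finset.sum_comm]
  rw [Finset.sum_comm]
  exact Finset.sum_congr rfl fun c _ => Finset.sum_comm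

private lemma FS_cyc3 {α β : Type*} [AddCommMonoid β] (s : Finset α) (f : α → α → α → β) :
    ∑ x ∈ s, ∑ a ∈ s, ∑ b ∈ s, f x a b = ∑ a ∈ s, ∑ b ∈ s, ∑ x ∈ s, f x a b := by
  rw [Finset.sum_comm]
  exact Finset.sum_congr rfl fun a _ => Finset.sum_comm

section FSaux

open Finset
variable {n : ℕ} {k : Type*} [CommRing k] {φ : Fin n → Fin n}
  {R : (Fin n → k) ⊗[k] (Fin n → k) →ₗ[k] (Fin n → k) ⊗[k] (Fin n → k)}
  (hR : ∀ i j : Fin n,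
      R ((Pi.basisFun k (Fin n)) i ⊗ₜ[k] (Pi.basisFun k (Fin n)) j) =
        if i = j then
          ∑ a ∈ univ.filter (fun a => φ a = i), ∑ b ∈ univ.filter (fun b => φ b = i),
            (Pi.basisFun k (Fin n)) a ⊗ₜ[k] (Pi.basisFun k (Fin n)) b
        else 0)

local notation "e" => Pi.basisFun k (Fin n)
local notation "A" i => univ.filter (fun a => φ a = i)

set_option maxHeartbeats 1000000 in
set_option synthInstance.maxHeartbeats 400000 in
include hR in
private lemma FS_h12 (i j l : Fin n) :
    leg12 R (e i ⊗ₜ[k] (e j ⊗ₜ[k] e l)) =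
      if i = j then ∑ a ∈ A i, ∑ b ∈ A i, e a ⊗ₜ[k] (e b ⊗ₜ[k] e l) else 0 := by
  simp only [leg12, LinearMap.comp_apply, LinearEquiv.coe_coe, TensorProduct.assoc_symm_tmul,
    TensorProduct.map_tmul, LinearMap.id_coe, id_eq, hR]
  split_ifs with h
  · rw [TensorProduct.sum_tmul, map_sum]
    refine Finset.sum_congr rfl fun a _ => ?_
    rw [TensorProduct.sum_tmul, map_sum]
    exact Finset.sum_congr rfl fun b _ => TensorProduct.assoc_tmul _ _ _
  · simp

set_option maxHeartbeats 1000000 in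
set_option synthInstance.maxHeartbeats 400000 in
include hR in
private lemma FS_h23 (i j l : Fin n) :
    leg23 R (e i ⊗ₜ[k] (e j ⊗ₜ[k] e l)) =
      if j = l then ∑ a ∈ A j, ∑ b ∈ A j, e i ⊗ₜ[k] (e a ⊗ₜ[k] e b) else 0 := by
  simp only [leg23, TensorProduct.map_tmul, LinearMap.id_coe, id_eq, hR]
  split_ifs with h
  · rw [TensorProduct.tmul_sum]
    exact Finset.sum_congr rfl fun a _ => TensorProduct.tmul_sum _ _ _
  · simp

set_option maxHeartbeats 1000000 in
set_option synthInstance.maxHeartbeats 400000 in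
include hR in
private lemma FS_h13 (i j l : Fin n) :
    leg13 R (e i ⊗ₜ[k] (e j ⊗ₜ[k] e l)) =
      if i = l then ∑ a ∈ A i, ∑ b ∈ A i, e a ⊗ₜ[k] (e j ⊗ₜ[k] e b) else 0 := by
  have step1 : (TensorProduct.map (LinearMap.id (R := k)) (TensorProduct.comm k (Fin n → k) (Fin n → k)).toLinearMap)
      (e i ⊗ₜ[k] (e j ⊗ₜ[k] e l)) = e i ⊗ₜ[k] (e l ⊗ₜ[k] e j) := by
    simp [TensorProduct.map_tmul, TensorProduct.comm_tmul]
  simp only [leg13, LinearMap.comp_apply, step1, FS_h12 hR i l j]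
  split_ifs with h
  · rw [map_sum]
    refine Finset.sum_congr rfl fun a _ => ?_
    rw [map_sum]
    refine Finset.sum_congr rfl fun b _ => ?_
    simp [TensorProduct.map_tmul, TensorProduct.comm_tmul]
  · simp

set_option maxHeartbeats 1000000 in
set_option synthInstance.maxHeartbeats 400000 in
set_option maxHeartbeats 1000000 in
set_option synthInstance.maxHeartbeats 400000 in
include hR in
private lemma FS_c1 (hφ : φ ∘ φ = φ) (i j l : Fin n) :
    leg12 R (leg23 R (e i ⊗ₜ[k] (e j ⊗ₜ[k] e l))) =
      if i = j ∧ j = l then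
        ∑ a ∈ A i, ∑ b ∈ A i, ∑ c ∈ A i, e a ⊗ₜ[k] (e b ⊗ₜ[k] e c) else 0 := by
  rw [FS_h23 hR]
  split_ifs with hjl hT hT
  · rw [map_sum]
    simp only [map_sum, FS_h12 hR]
    rw [Finset.sum_comm]
    simp only [Finset.sum_ite_eq, mem_filter, mem_univ, true_and]
    rw [← hT.1]
    by_cases hfix : φ i = i
    · simp only [hfix, if_true]
      exact FS_cyc3 _ (fun x a b => e a ⊗ₜ[k] (e b ⊗ₜ[k] e x))
    · rw [FS_empty hφ hfix]
      simp
  · have hij : i ≠ j := fun h => hT ⟨h, hjl⟩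
    rw [map_sum]
    simp only [map_sum, FS_h12 hR]
    rw [Finset.sum_comm]
    simp only [Finset.sum_ite_eq, mem_filter, mem_univ, true_and]
    by_cases hphi : φ i = j
    · have hempty : (A i) = ∅ := FS_empty hφ fun hfix => hij (by rw [← hphi, hfix])
      simp [hempty]
    · simp [hphi]
  · exact absurd hT.2 hjl
  · simp

set_option maxHeartbeats 1000000 in
set_option synthInstance.maxHeartbeats 400000 in
include hR in
private lemma FS_c2 (hφ : φ ∘ φ = φ) (i j l : Fin n) :
    leg23 R (leg13 R (e i ⊗ₜ[k] (e j ⊗ₜ[k] e l))) =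
      if i = j ∧ j = l then
        ∑ a ∈ A i, ∑ b ∈ A i, ∑ c ∈ A i, e a ⊗ₜ[k] (e b ⊗ₜ[k] e c) else 0 := by
  rw [FS_h13 hR]
  split_ifs with hil hT hT
  · rw [map_sum]
    simp only [map_sum, FS_h23 hR]
    simp only [Finset.sum_ite_eq, mem_filter, mem_univ, true_and]
    rw [hT.1]
    by_cases hfix : φ j = j
    · simp only [hfix, if_true]
    · rw [FS_empty hφ hfix]
      simp
  · have hij : i ≠ j := fun h => hT ⟨h, by rw [← h]; exact hil⟩
    rw [map_sum]
    simp only [map_sum, FS_h23 hR]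
    simp only [Finset.sum_ite_eq, mem_filter, mem_univ, true_and]
    by_cases hphj : φ j = i
    · have hempty : (A j) = ∅ := FS_empty hφ fun hfix => hij (by rw [← hphj, hfix])
      simp [hempty]
    · simp [hphj]
  · exact absurd (hT.1.trans hT.2) hil
  · simp

set_option maxHeartbeats 1000000 in
set_option synthInstance.maxHeartbeats 400000 in
include hR in
private lemma FS_c3 (hφ : φ ∘ φ = φ) (i j l : Fin n) :
    leg13 R (leg12 R (e i ⊗ₜ[k] (e j ⊗ₜ[k] e l))) =
      if i = j ∧ j = l then
        ∑ a ∈ A i, ∑ b ∈ A i, ∑ c ∈ A i, e a ⊗ₜ[k] (e b ⊗ₜ[k] e c) else 0 := by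
  rw [FS_h12 hR]
  split_ifs with hij hT hT
  · rw [map_sum]
    simp only [map_sum, FS_h13 hR]
    simp only [Finset.sum_ite_irrel, Finset.sum_const_zero, Finset.sum_ite_eq', mem_filter, mem_univ, true_and]
    rw [← hT.2, ← hij]
    by_cases hfix : φ i = i
    · simp only [hfix, if_true]
      rw [Finset.sum_comm]
    · rw [FS_empty hφ hfix]
      simp
  · have hjl : j ≠ l := fun h => hT ⟨hij, h⟩
    rw [map_sum]
    simp only [map_sum, FS_h13 hR]
    simp only [Finset.sum_ite_irrel, Finset.sum_const_zero, Finset.sum_ite_eq', mem_filter, mem_univ, true_and]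
    by_cases hphl : φ l = i
    · have hempty : (A l) = ∅ := FS_empty hφ fun hfix => hjl (by rw [← hij, ← hphl, hfix])
      simp [hempty]
    · simp [hphl]
  · exact absurd hT.1 hij
  · simp

end FSaux

set_option maxHeartbeats 1000000 in
set_option synthInstance.maxHeartbeats 400000 in
open Finset in
/-- For an idempotent map `φ : {1,…,n} → {1,…,n}`, the map
`R^φ(m_i ⊗ m_j) = δ_{ij} Σ_{a,b ∈ φ⁻¹(i)} m_a ⊗ m_b` satisfies the FS-equation. -/
theorem idempotent_function_gives_FS_solution
    {n : ℕ} (hn : 0 < n) (φ : Fin n → Fin n) (hφ : φ ∘ φ = φ)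
    (R : (Fin n → k) ⊗[k] (Fin n → k) →ₗ[k] (Fin n → k) ⊗[k] (Fin n → k))
    (hR : ∀ i j : Fin n,
      R ((Pi.basisFun k (Fin n)) i ⊗ₜ[k] (Pi.basisFun k (Fin n)) j) =
        if i = j then
          ∑ a ∈ univ.filter (fun a => φ a = i), ∑ b ∈ univ.filter (fun b => φ b = i),
            (Pi.basisFun k (Fin n)) a ⊗ₜ[k] (Pi.basisFun k (Fin n)) b
        else 0) :
    leg12 R ∘ₗ leg23 R = leg23 R ∘ₗ leg13 R ∧
      leg23 R ∘ₗ leg13 R = leg13 R ∘ₗ leg12 R := by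
  have e := Pi.basisFun k (Fin n)
  constructor
  · refine Module.Basis.ext ((Pi.basisFun k (Fin n)).tensorProduct
      ((Pi.basisFun k (Fin n)).tensorProduct (Pi.basisFun k (Fin n)))) ?_
    rintro ⟨i, j, l⟩
    simp only [Module.Basis.tensorProduct_apply, LinearMap.comp_apply]
    rw [FS_c1 hR hφ i j l, FS_c2 hR hφ i j l]
  · refine Module.Basis.ext ((Pi.basisFun k (Fin n)).tensorProduct
      ((Pi.basisFun k (Fin n)).tensorProduct (Pi.basisFun k (Fin n)))) ?_
    rintro ⟨i, j, l⟩
    simp only [Module.Basis.tensorProduct_apply, LinearMap.comp_apply]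
    rw [FS_c2 hR hφ i j l, FS_c3 hR hφ i j l]
end
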